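/- Let V be a finite set, π strictly positive probability weights on V, and η, π probability vectors. Then the total variation distance between the Multinomial distributions μ_{k,η} and μ_{k,π} (k trials) satisfies ‖μ_{k,η} − μ_{k,π}‖_TV ≤ √(e·k) · √(∑_{x∈V} π(x)·(η(x)/π(x) − 1)^2). -/

import Mathlib

open Finset

/-- Multinomial distribution with `k` trials and success probabilities `p`,
on configurations `ξ : V → ℕ` with total sum `k` (encoded via `Fin (k+1)`). -/
noncomputable def multinomialPMF {V : Type*} [Fintype V] [DecidableEq V] (k : ℕ) (p : V → ℝ)
    (ξ : {ξ : V → Fin (k + 1) // ∑ x, (ξ x : ℕ) = k}) : ℝ :=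
  (Nat.factorial k : ℝ) * ∏ x, p x ^ (ξ.1 x : ℕ) / (Nat.factorial (ξ.1 x) : ℝ)

lemma multinomialPMF_sum {V : Type*} [Fintype V] [DecidableEq V] (k : ℕ) (g : V → ℝ) :
    ∑ ξ : {ξ : V → Fin (k + 1) // ∑ x, (ξ x : ℕ) = k}, multinomialPMF k g ξ
      = (∑ x, g x) ^ k := by
  rw [Finset.sum_pow_eq_sum_piAntidiag]
  refine Finset.sum_bij' (fun ξ _ => fun x => (ξ.1 x : ℕ))
    (fun ν hν => ⟨fun x => ⟨ν x, by
      have hmem := Finset.mem_piAntidiag.mp hν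
      have : ν x ≤ k := by
        rw [← hmem.1]
        exact Finset.single_le_sum (fun i _ => Nat.zero_le _) (Finset.mem_univ x)
      omega⟩, by
      have hmem := Finset.mem_piAntidiag.mp hν
      simpa using hmem.1⟩) ?_ ?_ ?_ ?_ ?_
  · intro ξ _
    rw [Finset.mem_piAntidiag]
    exact ⟨ξ.2, fun i _ => Finset.mem_univ i⟩
  · intro ν _; exact Finset.mem_univ _
  · intro ξ _
    apply Subtype.ext
    funext x
    rfl
  · intro ν hν; rfl
  · intro ξ hξ
    have hfac : (∏ x, (Nat.factorial (ξ.1 x : ℕ) : ℝ)) ≠ 0 := by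
      refine ne_of_gt (Finset.prod_pos fun x _ => ?_)
      exact_mod_cast Nat.factorial_pos _
    have hspec : ((Nat.multinomial Finset.univ (fun x => (ξ.1 x : ℕ))) : ℝ)
        * ∏ x, (Nat.factorial (ξ.1 x : ℕ) : ℝ) = (Nat.factorial k : ℝ) := by
      have h := Nat.multinomial_spec (s := Finset.univ) (f := fun x => (ξ.1 x : ℕ))
      simp only at h
      rw [ξ.2] at h
      rw [mul_comm]
      exact_mod_cast h
    simp only [multinomialPMF]
    rw [Finset.prod_div_distrib, ← mul_div_assoc, div_eq_iff hfac]
    linear_combination (-(∏ x, g x ^ ((ξ.1 x : ℕ)))) * hspec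

lemma multinomialPMF_pos {V : Type*} [Fintype V] [DecidableEq V] (k : ℕ) (p : V → ℝ)
    (hp : ∀ x, 0 < p x) (ξ : {ξ : V → Fin (k + 1) // ∑ x, (ξ x : ℕ) = k}) :
    0 < multinomialPMF k p ξ := by
  unfold multinomialPMF
  refine mul_pos (by exact_mod_cast Nat.factorial_pos k) (Finset.prod_pos fun x _ => ?_)
  exact div_pos (pow_pos (hp x) _) (by exact_mod_cast Nat.factorial_pos _)

lemma multinomialPMF_nonneg {V : Type*} [Fintype V] [DecidableEq V] (k : ℕ) (p : V → ℝ)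
    (hp : ∀ x, 0 ≤ p x) (ξ : {ξ : V → Fin (k + 1) // ∑ x, (ξ x : ℕ) = k}) :
    0 ≤ multinomialPMF k p ξ := by
  unfold multinomialPMF
  refine mul_nonneg (Nat.cast_nonneg _) (Finset.prod_nonneg fun x _ => ?_)
  exact div_nonneg (pow_nonneg (hp x) _) (Nat.cast_nonneg _)

lemma multinomialPMF_chi {V : Type*} [Fintype V] [DecidableEq V] (k : ℕ) (π η : V → ℝ)
    (hπpos : ∀ x, 0 < π x) (ξ : {ξ : V → Fin (k + 1) // ∑ x, (ξ x : ℕ) = k}) :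
    (multinomialPMF k η ξ) ^ 2 / multinomialPMF k π ξ
      = multinomialPMF k (fun x => (η x) ^ 2 / π x) ξ := by
  unfold multinomialPMF
  rw [Finset.prod_div_distrib, Finset.prod_div_distrib, Finset.prod_div_distrib]
  have h1 : ∀ x : V, ((η x) ^ 2) ^ (ξ.1 x : ℕ) = ((η x) ^ (ξ.1 x : ℕ)) ^ 2 := by
    intro x; rw [← pow_mul, ← pow_mul, Nat.mul_comm]
  simp_rw [div_pow, h1, Finset.prod_div_distrib, Finset.prod_pow]
  have hB : (0:ℝ) < ∏ x, (π x) ^ ((ξ.1 x : ℕ)) :=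
    Finset.prod_pos fun x _ => pow_pos (hπpos x) _
  have hF : (0:ℝ) < ∏ x, (Nat.factorial (ξ.1 x) : ℝ) :=
    Finset.prod_pos fun x _ => by exact_mod_cast Nat.factorial_pos _
  have hk : (0:ℝ) < (Nat.factorial k : ℝ) := by exact_mod_cast Nat.factorial_pos k
  field_simp

theorem tv_distance_multinomials {V : Type*} [Fintype V] [DecidableEq V] [Nonempty V]
    (k : ℕ) (π η : V → ℝ)
    (hπpos : ∀ x, 0 < π x) (hπ1 : ∑ x, π x = 1)
    (hηpos : ∀ x, 0 ≤ η x) (hη1 : ∑ x, η x = 1) :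
    (1 / 2) * ∑ ξ : {ξ : V → Fin (k + 1) // ∑ x, (ξ x : ℕ) = k},
        |multinomialPMF k η ξ - multinomialPMF k π ξ|
      ≤ Real.sqrt (Real.exp 1 * k) * Real.sqrt (∑ x, π x * (η x / π x - 1) ^ 2) := by
  set Ω := {ξ : V → Fin (k + 1) // ∑ x, (ξ x : ℕ) = k}
  set a : ℝ := ∑ x, π x * (η x / π x - 1) ^ 2 with ha_def
  have ha0 : 0 ≤ a := Finset.sum_nonneg fun x _ => mul_nonneg (hπpos x).le (sq_nonneg _)
  -- sum of each pmf is 1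
  have hsum_π : ∑ ξ : Ω, multinomialPMF k π ξ = 1 := by
    rw [multinomialPMF_sum, hπ1, one_pow]
  have hsum_η : ∑ ξ : Ω, multinomialPMF k η ξ = 1 := by
    rw [multinomialPMF_sum, hη1, one_pow]
  -- chi-squared identity
  have hchi_base : ∑ x, (η x) ^ 2 / π x = 1 + a := by
    have : ∀ x : V, π x * (η x / π x - 1) ^ 2 = (η x) ^ 2 / π x - 2 * η x + π x := by
      intro x
      have := (hπpos x).ne'
      field_simp
      ring
    simp_rw [ha_def, this]
    rw [Finset.sum_add_distrib, Finset.sum_sub_distrib, ← Finset.mul_sum, hη1, hπ1]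
    ring
  have hchi : ∑ ξ : Ω, (multinomialPMF k η ξ) ^ 2 / multinomialPMF k π ξ = (1 + a) ^ k := by
    calc ∑ ξ : Ω, (multinomialPMF k η ξ) ^ 2 / multinomialPMF k π ξ
        = ∑ ξ : Ω, multinomialPMF k (fun x => (η x) ^ 2 / π x) ξ :=
          Finset.sum_congr rfl fun ξ _ => multinomialPMF_chi k π η hπpos ξ
      _ = (∑ x, (η x) ^ 2 / π x) ^ k := multinomialPMF_sum k _
      _ = (1 + a) ^ k := by rw [hchi_base]
  set S : ℝ := ∑ ξ : Ω, |multinomialPMF k η ξ - multinomialPMF k π ξ| with hS_def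
  have hS0 : 0 ≤ S := Finset.sum_nonneg fun ξ _ => abs_nonneg _
  -- S ≤ 2
  have hS2 : S ≤ 2 := by
    have : S ≤ ∑ ξ : Ω, (multinomialPMF k η ξ + multinomialPMF k π ξ) := by
      refine Finset.sum_le_sum fun ξ _ => ?_
      have h1 := multinomialPMF_nonneg k η hηpos ξ
      have h2 := (multinomialPMF_pos k π hπpos ξ).le
      rw [abs_sub_le_iff]; constructor <;> linarith
    rw [Finset.sum_add_distrib, hsum_η, hsum_π] at this
    linarith
  -- Cauchy–Schwarz: S^2 ≤ (1+a)^k - 1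
  have hCS : S ^ 2 ≤ (1 + a) ^ k - 1 := by
    have key := Finset.sum_mul_sq_le_sq_mul_sq Finset.univ
      (fun ξ : Ω => Real.sqrt (multinomialPMF k π ξ))
      (fun ξ : Ω => |multinomialPMF k η ξ - multinomialPMF k π ξ| /
        Real.sqrt (multinomialPMF k π ξ))
    have hpos : ∀ ξ : Ω, 0 < multinomialPMF k π ξ := multinomialPMF_pos k π hπpos
    have hsqrtpos : ∀ ξ : Ω, 0 < Real.sqrt (multinomialPMF k π ξ) :=
      fun ξ => Real.sqrt_pos.mpr (hpos ξ)
    have e1 : ∀ ξ : Ω, Real.sqrt (multinomialPMF k π ξ) *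
        (|multinomialPMF k η ξ - multinomialPMF k π ξ| / Real.sqrt (multinomialPMF k π ξ))
        = |multinomialPMF k η ξ - multinomialPMF k π ξ| := by
      intro ξ; rw [mul_comm, div_mul_cancel₀ _ (hsqrtpos ξ).ne']
    have e2 : ∀ ξ : Ω, Real.sqrt (multinomialPMF k π ξ) ^ 2 = multinomialPMF k π ξ :=
      fun ξ => Real.sq_sqrt (hpos ξ).le
    have e3 : ∀ ξ : Ω, (|multinomialPMF k η ξ - multinomialPMF k π ξ| /
        Real.sqrt (multinomialPMF k π ξ)) ^ 2
        = (multinomialPMF k η ξ) ^ 2 / multinomialPMF k π ξ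
          - 2 * multinomialPMF k η ξ + multinomialPMF k π ξ := by
      intro ξ
      rw [div_pow, sq_abs, e2]
      have := (hpos ξ).ne'
      field_simp
      ring
    simp_rw [e1, e2, e3] at key
    have h9 : ∑ ξ : Ω, ((multinomialPMF k η ξ) ^ 2 / multinomialPMF k π ξ
        - 2 * multinomialPMF k η ξ + multinomialPMF k π ξ) = (1 + a) ^ k - 1 := by
      rw [Finset.sum_add_distrib, Finset.sum_sub_distrib, ← Finset.mul_sum,
        hsum_η, hsum_π, hchi]
      ring
    rw [h9, hsum_π, one_mul] at key
    rw [hS_def]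
    exact key
  -- final elementary bound: (S/2)^2 ≤ e * k * a
  have hfinal : (S / 2) ^ 2 ≤ Real.exp 1 * k * a := by
    rcases le_or_gt ((k : ℝ) * a) 1 with hka | hka
    · have h1 : (1 + a) ^ k ≤ Real.exp ((k : ℝ) * a) := by
        calc (1 + a) ^ k ≤ (Real.exp a) ^ k := by
              apply pow_le_pow_left₀ (by linarith)
              linarith [Real.add_one_le_exp a]
          _ = Real.exp ((k : ℝ) * a) := by
              rw [← Real.exp_nat_mul]
      have h2 : Real.exp ((k : ℝ) * a) * (1 - (k : ℝ) * a) ≤ 1 := by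
        have h3 := Real.add_one_le_exp (-((k : ℝ) * a))
        have h4 : Real.exp (-((k : ℝ) * a)) = (Real.exp ((k : ℝ) * a))⁻¹ := Real.exp_neg _
        rw [h4] at h3
        have h5 := Real.exp_pos ((k : ℝ) * a)
        have h6 := mul_le_mul_of_nonneg_left h3 h5.le
        rw [mul_inv_cancel₀ h5.ne'] at h6
        nlinarith
      have h6 : Real.exp ((k : ℝ) * a) ≤ Real.exp 1 := Real.exp_le_exp.mpr hka
      have h7 := Real.exp_pos ((k : ℝ) * a)
      have hka0 : 0 ≤ (k : ℝ) * a := mul_nonneg (Nat.cast_nonneg k) ha0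
      nlinarith
    · have h1 : (S / 2) ^ 2 ≤ 1 := by nlinarith
      have h2 : (2 : ℝ) ≤ Real.exp 1 := by
        have := Real.add_one_le_exp 1
        linarith
      have hka0 : 0 ≤ (k : ℝ) * a := mul_nonneg (Nat.cast_nonneg k) ha0
      nlinarith
  have hT0 : 0 ≤ S / 2 := by linarith
  calc (1 / 2) * S = S / 2 := by ring
    _ ≤ Real.sqrt (Real.exp 1 * k * a) := by
        rw [show Real.exp 1 * ↑k * a = (S/2)^2 + (Real.exp 1 * ↑k * a - (S/2)^2) by ring]
        calc S / 2 = Real.sqrt ((S/2)^2) := (Real.sqrt_sq hT0).symm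
          _ ≤ _ := Real.sqrt_le_sqrt (by nlinarith)
    _ = Real.sqrt (Real.exp 1 * k) * Real.sqrt a := by
        rw [Real.sqrt_mul (by positivity)]
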